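/- Let Q be a quantale, M a shrinkable Q-module, and F, G multiplicative filters of Q. For a, b ∈ M and n, m ≥ 1, if a ≼ⁿ_F b and a ≼ᵐ_G b, then a ≼^{n+m-1}_{F ∩ G} b. -/

import Mathlib

universe u v

/-- A (commutative, integral) quantale: a complete lattice with a commutative monoid
structure whose unit is the top element and whose multiplication distributes over
arbitrary suprema. -/
class IntegralQuantale (Q : Type u) extends CompleteLattice Q, CommMonoid Q where
  one_eq_top : (1 : Q) = ⊤
  mul_sSup : ∀ (a : Q) (S : Set Q), a * sSup S = ⨆ b ∈ S, a * b

/-- A module over a quantale. -/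
class QModule (Q : Type u) [IntegralQuantale Q] (M : Type v) extends
    CompleteLattice M, SMul Q M where
  mul_smul' : ∀ (p q : Q) (m : M), (p * q) • m = p • (q • m)
  top_smul' : ∀ m : M, (⊤ : Q) • m = m
  smul_sSup' : ∀ (q : Q) (S : Set M), S.Nonempty → q • sSup S = ⨆ m ∈ S, q • m
  sSup_smul' : ∀ (S : Set Q) (m : M), S.Nonempty → (⨆ q ∈ S, (q : Q)) • m = ⨆ q ∈ S, q • m

/-- A multiplicative filter of a quantale. -/
def IsMFilter {Q : Type u} [IntegralQuantale Q] (F : Set Q) : Prop :=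
  ⊤ ∈ F ∧ (∀ a ∈ F, ∀ b : Q, a ≤ b → b ∈ F) ∧ ∀ a ∈ F, ∀ b ∈ F, a * b ∈ F

/-- `a ≼¹_F b`: `a` is locally less than `b` in one step; witnessed by a nonempty
family of pairs `(aᵢ, sᵢ)` with `sᵢ ∈ F`, `a ≤ ⨆ aᵢ` and `sᵢ • aᵢ ≤ b`. -/
def stepLE {Q : Type u} {M : Type v} [IntegralQuantale Q] [QModule Q M]
    (F : Set Q) (a b : M) : Prop :=
  ∃ P : Set (M × Q), P.Nonempty ∧ (∀ p ∈ P, p.2 ∈ F) ∧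
    (a ≤ ⨆ p ∈ P, Prod.fst p) ∧ ∀ p ∈ P, p.2 • p.1 ≤ b

/-- `a ≼ⁿ_F b`: locally less than in `n` steps. -/
def nStepLE {Q : Type u} {M : Type v} [IntegralQuantale Q] [QModule Q M]
    (F : Set Q) : ℕ → M → M → Prop
  | 0, a, b => a = b
  | n + 1, a, b => ∃ c : M, stepLE F a c ∧ nStepLE F n c b

/-- `a ≼_F b`: locally less than (in some positive number of steps). -/
def localLE {Q : Type u} {M : Type v} [IntegralQuantale Q] [QModule Q M]
    (F : Set Q) (a b : M) : Prop :=
  ∃ n : ℕ, 1 ≤ n ∧ nStepLE F n a b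

/-- A complete lattice is shrinkable if every inequality `x ≤ ⨆ xᵢ` can be shrunk
to an equality `x = ⨆ yⱼ` with each `yⱼ` below a finite subsupremum of the `xᵢ`. -/
def Shrinkable (L : Type u) [CompleteLattice L] : Prop :=
  ∀ (x : L) (S : Set L), S.Nonempty → x ≤ sSup S →
    ∃ Y : Set L, Y.Nonempty ∧ x = sSup Y ∧
      ∀ y ∈ Y, ∃ T : Finset L, T.Nonempty ∧ ↑T ⊆ S ∧ y ≤ T.sup id

namespace FilterMergeAux

variable {Q : Type u} {M : Type v} [IntegralQuantale Q] [QModule Q M]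

lemma smul_sup' (q : Q) (m m' : M) : q • (m ⊔ m') = q • m ⊔ q • m' := by
  have h := QModule.smul_sSup' q ({m, m'} : Set M) ⟨m, by simp⟩
  rw [sSup_pair, iSup_pair] at h
  exact h

lemma sup_smul' (s t : Q) (m : M) : (s ⊔ t) • m = s • m ⊔ t • m := by
  have h := QModule.sSup_smul' ({s, t} : Set Q) m ⟨s, by simp⟩
  rw [show (⨆ q ∈ ({s, t} : Set Q), (q : Q)) = s ⊔ t from iSup_pair, iSup_pair] at h
  exact h

lemma smul_mono_right (q : Q) {m m' : M} (h : m ≤ m') : q • m ≤ q • m' := by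
  have : m' = m ⊔ m' := (sup_eq_right.mpr h).symm
  rw [this, smul_sup']
  exact le_sup_left

lemma smul_mono_left {s t : Q} (h : s ≤ t) (m : M) : s • m ≤ t • m := by
  have : t = s ⊔ t := (sup_eq_right.mpr h).symm
  rw [this, sup_smul']
  exact le_sup_left

lemma mul_le_left' (s t : Q) : s * t ≤ s := by
  have h := IntegralQuantale.mul_sSup s ({t, 1} : Set Q)
  rw [sSup_pair, iSup_pair] at h
  have ht : t ⊔ 1 = 1 := sup_eq_right.mpr (IntegralQuantale.one_eq_top (Q := Q) ▸ le_top)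
  rw [ht, mul_one] at h
  exact le_sup_left.trans_eq h.symm

lemma mul_le_right' (s t : Q) : s * t ≤ t := by
  rw [mul_comm]; exact mul_le_left' t s

/-- The one-step "local below" operator. -/
def DD (F : Set Q) (y : M) : M := sSup {x : M | ∃ s ∈ F, s • x ≤ y}

def Dn (F : Set Q) : ℕ → M → M
  | 0, b => b
  | k + 1, b => DD F (Dn F k b)

lemma le_DD {F : Set Q} (hF : (⊤ : Q) ∈ F) (b : M) : b ≤ DD F b :=
  le_sSup ⟨⊤, hF, le_of_eq (QModule.top_smul' b)⟩

lemma DD_mono {F : Set Q} {y y' : M} (h : y ≤ y') : DD F y ≤ DD F y' :=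
  sSup_le fun x ⟨s, hs, hsx⟩ => le_sSup ⟨s, hs, hsx.trans h⟩

lemma le_Dn {F : Set Q} (hF : (⊤ : Q) ∈ F) (k : ℕ) (b : M) : b ≤ Dn F k b := by
  induction k with
  | zero => exact le_rfl
  | succ k ih => exact ih.trans (le_DD hF (Dn F k b))

lemma stepLE_le_DD {F : Set Q} {a b : M} (h : stepLE F a b) : a ≤ DD F b := by
  obtain ⟨P, -, hmem, hcov, hbd⟩ := h
  exact hcov.trans (iSup₂_le fun p hp => le_sSup ⟨p.2, hmem p hp, hbd p hp⟩)

lemma le_Dn_of_nStep {F : Set Q} : ∀ {n : ℕ} {a b : M}, nStepLE F n a b → a ≤ Dn F n b := by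
  intro n
  induction n with
  | zero => intro a b h; exact le_of_eq h
  | succ n ih =>
    intro a b h
    obtain ⟨c, hstep, hrest⟩ := h
    exact (stepLE_le_DD hstep).trans (DD_mono (ih hrest))

lemma stepLE_of_le_DD {F : Set Q} (hF : IsMFilter F) {a b : M} (h : a ≤ DD F b) :
    stepLE F a b := by
  refine ⟨{q : M × Q | q.2 ∈ F ∧ q.2 • q.1 ≤ b}, ⟨(b, ⊤), hF.1, le_of_eq (QModule.top_smul' b)⟩,
    fun p hp => hp.1, ?_, fun p hp => hp.2⟩
  refine h.trans (sSup_le ?_)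
  rintro x ⟨s, hs, hsx⟩
  exact le_iSup₂_of_le (x, s) ⟨hs, hsx⟩ le_rfl

lemma nStep_of_le_Dn {F : Set Q} (hF : IsMFilter F) (b : M) :
    ∀ (k : ℕ) (a : M), a ≤ Dn F (k + 1) b → nStepLE F (k + 1) a b := by
  intro k
  induction k with
  | zero => intro a h; exact ⟨b, stepLE_of_le_DD hF h, rfl⟩
  | succ k ih =>
    intro a h
    exact ⟨Dn F (k + 1) b, stepLE_of_le_DD hF h, ih _ le_rfl⟩

lemma finset_witness {F : Set Q} (hF : IsMFilter F) (y : M) :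
    ∀ (T : Finset M), T.Nonempty → (∀ x ∈ T, ∃ s ∈ F, s • x ≤ y) →
      ∃ s ∈ F, ∀ x ∈ T, s • x ≤ y := by
  classical
  intro T
  induction T using Finset.induction_on with
  | empty => intro h; exact absurd h (by simp)
  | insert _ _ ha =>
    rename_i a T ih
    intro _ hw
    obtain ⟨sa, hsa, hsay⟩ := hw a (Finset.mem_insert_self a T)
    rcases T.eq_empty_or_nonempty with rfl | hTne
    · exact ⟨sa, hsa, by simpa using hsay⟩
    · obtain ⟨s, hs, hsy⟩ := ih hTne fun x hx => hw x (Finset.mem_insert_of_mem hx)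
      refine ⟨sa * s, hF.2.2 sa hsa s hs, ?_⟩
      intro x hx
      rcases Finset.mem_insert.mp hx with rfl | hx
      · exact (smul_mono_left (mul_le_left' sa s) x).trans hsay
      · exact (smul_mono_left (mul_le_right' sa s) x).trans (hsy x hx)

lemma shrink_witness (hM : Shrinkable M) {F : Set Q} (hF : IsMFilter F) {x y : M}
    (h : x ≤ DD F y) :
    ∃ Y : Set M, Y.Nonempty ∧ x = sSup Y ∧ ∀ w ∈ Y, ∃ s ∈ F, s • w ≤ y := by
  have hSne : ({x : M | ∃ s ∈ F, s • x ≤ y} : Set M).Nonempty :=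
    ⟨y, ⊤, hF.1, le_of_eq (QModule.top_smul' y)⟩
  obtain ⟨Y, hYne, hxY, hYfin⟩ := hM x _ hSne h
  refine ⟨Y, hYne, hxY, ?_⟩
  intro w hw
  obtain ⟨T, hTne, hTsub, hwT⟩ := hYfin w hw
  obtain ⟨s, hs, hsT⟩ := finset_witness hF y T hTne fun z hz => hTsub (Finset.mem_coe.mpr hz)
  refine ⟨s, hs, ?_⟩
  have h1 : s • w ≤ s • (T.sup id) := smul_mono_right s hwT
  have h2 : s • (T.sup id) ≤ y := by
    rw [Finset.sup_id_eq_sSup, QModule.smul_sSup' s _ (by exact_mod_cast hTne)]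
    exact iSup₂_le fun z hz => hsT z hz
  exact h1.trans h2

lemma merge (hM : Shrinkable M) {F G : Set Q} (hF : IsMFilter F) (hG : IsMFilter G)
    {x y z : M} (hxy : x ≤ DD F y) (hxz : x ≤ DD G z) :
    ∃ P : Set (M × Q), (x ≤ ⨆ q ∈ P, Prod.fst q) ∧
      ∀ q ∈ P, ∃ s ∈ F, ∃ t ∈ G, q.2 = s ⊔ t ∧ s • q.1 ≤ y ∧ t • q.1 ≤ z := by
  classical
  set P : Set (M × Q) :=
    {q : M × Q | ∃ s ∈ F, ∃ t ∈ G, q.2 = s ⊔ t ∧ s • q.1 ≤ y ∧ t • q.1 ≤ z} with hP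
  refine ⟨P, ?_, fun q hq => hq⟩
  obtain ⟨Y, hYne, hxY, hYw⟩ := shrink_witness hM hF hxy
  rw [hxY]
  refine sSup_le ?_
  intro w hw
  obtain ⟨s, hs, hsw⟩ := hYw w hw
  have hwx : w ≤ x := hxY ▸ le_sSup hw
  obtain ⟨Z, hZne, hwZ, hZw⟩ := shrink_witness hM hG (hwx.trans hxz)
  rw [hwZ]
  refine sSup_le ?_
  intro v hv
  obtain ⟨t, ht, htv⟩ := hZw v hv
  have hvw : v ≤ w := hwZ ▸ le_sSup hv
  have hsv : s • v ≤ y := (smul_mono_right s hvw).trans hsw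
  exact le_iSup₂_of_le (v, s ⊔ t) ⟨s, hs, t, ht, rfl, hsv, htv⟩ le_rfl

lemma inter_mFilter {F G : Set Q} (hF : IsMFilter F) (hG : IsMFilter G) :
    IsMFilter (F ∩ G) :=
  ⟨⟨hF.1, hG.1⟩,
   fun a ha b hab => ⟨hF.2.1 a ha.1 b hab, hG.2.1 a ha.2 b hab⟩,
   fun a ha b hb => ⟨hF.2.2 a ha.1 b hb.1, hG.2.2 a ha.2 b hb.2⟩⟩

lemma main (hM : Shrinkable M) {F G : Set Q} (hF : IsMFilter F) (hG : IsMFilter G) :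
    ∀ (k n m : ℕ), 1 ≤ n → 1 ≤ m → n + m ≤ k → ∀ (x b : M),
      x ≤ Dn F n b → x ≤ Dn G m b → x ≤ Dn (F ∩ G) (n + m - 1) b := by
  intro k
  induction k with
  | zero => intro n m hn hm hk; omega
  | succ k ih =>
    intro n m hn hm hk x b hx1 hx2
    obtain ⟨n', rfl⟩ : ∃ n', n = n' + 1 := ⟨n - 1, by omega⟩
    obtain ⟨m', rfl⟩ : ∃ m', m = m' + 1 := ⟨m - 1, by omega⟩
    have htopFG : (⊤ : Q) ∈ F ∩ G := ⟨hF.1, hG.1⟩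
    have hx1' : x ≤ DD F (Dn F n' b) := hx1
    have hx2' : x ≤ DD G (Dn G m' b) := hx2
    obtain ⟨P, hcov, hPw⟩ := merge hM hF hG hx1' hx2'
    have hstep : ∀ q ∈ P, q.1 ∈ {c : M | ∃ u ∈ F ∩ G, u • c ≤ Dn (F ∩ G) (n' + m') b} := by
      intro q hq
      obtain ⟨s, hs, t, ht, hq2, hsy, htz⟩ := hPw q hq
      refine ⟨s ⊔ t, ⟨hF.2.1 s hs _ le_sup_left, hG.2.1 t ht _ le_sup_right⟩, ?_⟩
      rw [sup_smul']
      have hα : s • q.1 ≤ Dn (F ∩ G) (n' + m') b := by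
        rcases Nat.eq_zero_or_pos n' with rfl | hn'
        · have : s • q.1 ≤ b := hsy
          rw [Nat.zero_add]
          exact this.trans (le_Dn htopFG m' b)
        · obtain ⟨n'', rfl⟩ : ∃ n'', n' = n'' + 1 := ⟨n' - 1, by omega⟩
          have h1 : s • q.1 ≤ Dn F (n'' + 1) b := hsy
          have h2 : s • q.1 ≤ Dn G (m' + 1) b := by
            refine le_sSup ⟨t, ht, ?_⟩
            rw [← QModule.mul_smul']
            exact (smul_mono_left (mul_le_left' t s) q.1).trans htz
          have h3 := ih (n'' + 1) (m' + 1) (by omega) (by omega) (by omega) _ b h1 h2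
          have he : n'' + 1 + (m' + 1) - 1 = n'' + 1 + m' := by omega
          rw [he] at h3
          exact h3
      have hβ : t • q.1 ≤ Dn (F ∩ G) (n' + m') b := by
        rcases Nat.eq_zero_or_pos m' with rfl | hm'
        · have : t • q.1 ≤ b := htz
          exact this.trans (le_Dn htopFG (n' + 0) b)
        · obtain ⟨m'', rfl⟩ : ∃ m'', m' = m'' + 1 := ⟨m' - 1, by omega⟩
          have h1 : t • q.1 ≤ Dn G (m'' + 1) b := htz
          have h2 : t • q.1 ≤ Dn F (n' + 1) b := by
            refine le_sSup ⟨s, hs, ?_⟩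
            rw [← QModule.mul_smul']
            exact (smul_mono_left (mul_le_left' s t) q.1).trans hsy
          have h3 := ih (n' + 1) (m'' + 1) (by omega) (by omega) (by omega) _ b h2 h1
          have he : n' + 1 + (m'' + 1) - 1 = n' + (m'' + 1) := by omega
          rw [he] at h3
          exact h3
      exact sup_le hα hβ
    have hgoal : x ≤ DD (F ∩ G) (Dn (F ∩ G) (n' + m') b) :=
      hcov.trans (iSup₂_le fun q hq => le_sSup (hstep q hq))
    have he : n' + 1 + (m' + 1) - 1 = (n' + m') + 1 := by omega
    rw [he]
    exact hgoal

end FilterMergeAux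

/-- Filter merging: if `a ≼ⁿ_F b` and `a ≼ᵐ_G b` in a shrinkable module,
then `a ≼^{n+m-1}_{F ∩ G} b`. -/
theorem filter_merge {Q : Type u} {M : Type v} [IntegralQuantale Q] [QModule Q M]
    (hM : Shrinkable M) (F G : Set Q) (hF : IsMFilter F) (hG : IsMFilter G)
    (a b : M) (n m : ℕ) (hn : 1 ≤ n) (hm : 1 ≤ m)
    (hFn : nStepLE F n a b) (hGm : nStepLE G m a b) :
    nStepLE (F ∩ G) (n + m - 1) a b := by
  have h1 := FilterMergeAux.le_Dn_of_nStep hFn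
  have h2 := FilterMergeAux.le_Dn_of_nStep hGm
  have h3 := FilterMergeAux.main hM hF hG (n + m) n m hn hm le_rfl a b h1 h2
  have he : n + m - 1 = (n + m - 2) + 1 := by omega
  rw [he] at h3 ⊢
  exact FilterMergeAux.nStep_of_le_Dn (FilterMergeAux.inter_mFilter hF hG) b _ a h3
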